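/- A finite partial order h is vertex-series-parallel if and only if it contains no four elements a, b, c, d with relations a ≻ c, a ≻ d, b ≻ d, and no other relations among {a,b,c,d} (i.e., a‖b, b‖c, c‖d in h): the induced suborder isomorphic to the 'N-shaped' forbidden subgraph. -/

import Mathlib

/-- Vertex-series-parallel partial orders, given as a ground set together with the
strict relation `≻` of the order (`r a b` means `a ≻ b`): any singleton is a VSP, and
series and parallel compositions of VSPs on disjoint ground sets are VSPs. -/
inductive IsVSP {α : Type*} [DecidableEq α] : Finset α → (α → α → Prop) → Prop
  | single (a : α) : IsVSP {a} fun _ _ => False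
  | series {s t : Finset α} {r1 r2 : α → α → Prop} :
      Disjoint s t → IsVSP s r1 → IsVSP t r2 →
      IsVSP (s ∪ t) fun a b => r1 a b ∨ r2 a b ∨ (a ∈ s ∧ b ∈ t)
  | parallel {s t : Finset α} {r1 r2 : α → α → Prop} :
      Disjoint s t → IsVSP s r1 → IsVSP t r2 →
      IsVSP (s ∪ t) fun a b => r1 a b ∨ r2 a b


set_option linter.unusedSectionVars false
set_option linter.unusedVariables false

namespace VSPAux

variable {α : Type*} [DecidableEq α]

def Step (s : Finset α) (g : α → α → Prop) (u v : α) : Prop := u ∈ s ∧ v ∈ s ∧ g u v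

def Reach (s : Finset α) (g : α → α → Prop) : α → α → Prop :=
  Relation.ReflTransGen (Step s g)

lemma reach_refl {s : Finset α} {g : α → α → Prop} {x : α} : Reach s g x x :=
  Relation.ReflTransGen.refl

lemma reach_trans {s : Finset α} {g : α → α → Prop} {x y z : α}
    (h1 : Reach s g x y) (h2 : Reach s g y z) : Reach s g x z :=
  Relation.ReflTransGen.trans h1 h2

lemma reach_symm {s : Finset α} {g : α → α → Prop} (hsym : ∀ x y, g x y → g y x)
    {x y : α} (h : Reach s g x y) : Reach s g y x := by
  induction h with
  | refl => exact reach_refl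
  | tail h1 h2 ih =>
      exact Relation.ReflTransGen.trans
        (Relation.ReflTransGen.single ⟨h2.2.1, h2.1, hsym _ _ h2.2.2⟩) ih

lemma mem_of_reach {s : Finset α} {g : α → α → Prop} {x y : α}
    (hx : x ∈ s) (h : Reach s g x y) : y ∈ s := by
  induction h with
  | refl => exact hx
  | tail _ h2 _ => exact h2.2.1

lemma reach_congr {s : Finset α} {g1 g2 : α → α → Prop} (h : ∀ x y, g1 x y → g2 x y)
    {x y : α} (hr : Reach s g1 x y) : Reach s g2 x y :=
  Relation.ReflTransGen.mono (r := Step s g1) (p := Step s g2)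
    (fun u v huv => ⟨huv.1, huv.2.1, h u v huv.2.2⟩) x y hr

lemma reach_closed {s : Finset α} {g : α → α → Prop} {C : α → Prop}
    (hcl : ∀ u v, C u → Step s g u v → C v) {x y : α} (hx : C x) (h : Reach s g x y) :
    C y := by
  induction h with
  | refl => exact hx
  | tail _ h2 ih => exact hcl _ _ ih h2

lemma not_reach_of_closed {s : Finset α} {g : α → α → Prop} {C : α → Prop}
    (hcl : ∀ u v, C u → Step s g u v → C v) {x y : α} (hx : C x) (hy : ¬ C y) :
    ¬ Reach s g x y := fun h => hy (reach_closed hcl hx h)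

def cpl (g : α → α → Prop) (x y : α) : Prop := x ≠ y ∧ ¬ g x y

lemma cpl_symm {g : α → α → Prop} (hsym : ∀ x y, g x y → g y x) :
    ∀ x y, cpl g x y → cpl g y x :=
  fun _ _ h => ⟨h.1.symm, fun hg => h.2 (hsym _ _ hg)⟩

lemma cpl_irrefl {g : α → α → Prop} : ∀ x, ¬ cpl g x x := fun _ h => h.1 rfl

lemma cpl_cpl {g : α → α → Prop} (hirr : ∀ x, ¬ g x x) :
    ∀ x y, cpl (cpl g) x y → g x y := by
  intro x y ⟨hne, h⟩
  by_contra hg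
  exact h ⟨hne, hg⟩

lemma cpl_cpl' {g : α → α → Prop} (hirr : ∀ x, ¬ g x x) :
    ∀ x y, g x y → cpl (cpl g) x y := by
  intro x y hg
  refine ⟨fun h => hirr x (h ▸ hg), fun h => h.2 hg⟩

def HasP4 (s : Finset α) (g : α → α → Prop) : Prop :=
  ∃ a b c d, a ∈ s ∧ b ∈ s ∧ c ∈ s ∧ d ∈ s ∧
    g a b ∧ g b c ∧ g c d ∧
    (a ≠ c ∧ ¬ g a c) ∧ (a ≠ d ∧ ¬ g a d) ∧ (b ≠ d ∧ ¬ g b d)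

lemma hasP4_cpl {s : Finset α} {g : α → α → Prop} (hsym : ∀ x y, g x y → g y x)
    (h : HasP4 s (cpl g)) : HasP4 s g := by
  obtain ⟨a, b, c, d, ha, hb, hc, hd, eab, ebc, ecd, ⟨nac, hac⟩, ⟨nad, had⟩, ⟨nbd, hbd⟩⟩ := h
  have gac : g a c := by by_contra hg; exact hac ⟨nac, hg⟩
  have gad : g a d := by by_contra hg; exact had ⟨nad, hg⟩
  have gbd : g b d := by by_contra hg; exact hbd ⟨nbd, hg⟩
  exact ⟨c, a, d, b, hc, ha, hd, hb, hsym _ _ gac, gad, hsym _ _ gbd,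
    ⟨ecd.1, ecd.2⟩, ⟨ebc.1.symm, fun hg => ebc.2 (hsym _ _ hg)⟩, ⟨eab.1, eab.2⟩⟩

lemma boundary {s' : Finset α} {co : α → α → Prop} {P : α → Prop} {u w : α}
    (h : Reach s' co u w) :
    ¬ P u → P w → ∃ u' w', Reach s' co u u' ∧ Step s' co u' w' ∧ ¬ P u' ∧ P w' := by
  induction h with
  | refl => intro hu hw; exact absurd hw hu
  | @tail b c h1 h2 ih =>
      intro hu hw
      by_cases hb : P b
      · exact ih hu hb
      · exact ⟨b, c, h1, h2, hb, hw⟩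


lemma key {s : Finset α} {g : α → α → Prop} (v : α) (hv : v ∈ s)
    (hsym : ∀ x y, g x y → g y x) (hirr : ∀ x, ¬ g x x) (hP4 : ¬ HasP4 s g)
    (hdisc : ∃ x ∈ s.erase v, ∃ y ∈ s.erase v, ¬ Reach (s.erase v) (cpl g) x y) :
    (∃ x ∈ s, ∃ y ∈ s, ¬ Reach s g x y) ∨ (∃ x ∈ s, ∃ y ∈ s, ¬ Reach s (cpl g) x y) := by
  classical
  obtain ⟨x0, hx0, y0, hy0, hxy⟩ := hdisc
  set s' := s.erase v with hs'
  have hsub : s' ⊆ s := Finset.erase_subset _ _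
  have cosym := cpl_symm hsym
  have hx0s : x0 ∈ s := hsub hx0
  have hy0s : y0 ∈ s := hsub hy0
  have hx0v : x0 ≠ v := Finset.ne_of_mem_erase hx0
  have hy0v : y0 ≠ v := Finset.ne_of_mem_erase hy0
  by_cases hM : ∀ u ∈ s', g v u
  · -- v adjacent to everything: v isolated in complement
    right
    refine ⟨v, hv, x0, hx0s, not_reach_of_closed (C := fun z => z = v) ?_ rfl hx0v⟩
    rintro u w rfl ⟨_, hws, hne, hng⟩
    rcases eq_or_ne w u with h | h
    · exact h
    · exact absurd (hM w (Finset.mem_erase.mpr ⟨h, hws⟩)) hng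
  · push_neg at hM
    obtain ⟨u0, hu0, hgu0⟩ := hM
    by_cases hmix : ∃ u ∈ s', ∃ w ∈ s', ¬ g v u ∧ g v w ∧ Reach s' (cpl g) u w
    · obtain ⟨u, hu, w, hw, hgu, hgw, hreach⟩ := hmix
      obtain ⟨u', w', hru', hstep, hPu', hPw'⟩ := boundary (P := fun z => g v z) hreach hgu hgw
      have hu's : u' ∈ s' := hstep.1
      have hw's : w' ∈ s' := hstep.2.1
      have hu'v : u' ≠ v := Finset.ne_of_mem_erase hu's
      have hw'v : w' ≠ v := Finset.ne_of_mem_erase hw's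
      by_cases hz : ∃ z ∈ s', ¬ Reach s' (cpl g) u' z ∧ ¬ g v z
      · obtain ⟨z, hzs, hnr, hgz⟩ := hz
        exfalso
        apply hP4
        have hw'z : ¬ Reach s' (cpl g) w' z :=
          fun h => hnr (Relation.ReflTransGen.trans (Relation.ReflTransGen.single hstep) h)
        have hne_wz : w' ≠ z := fun h => hw'z (h ▸ reach_refl)
        have gw'z : g w' z := by
          by_contra hng
          exact hw'z (Relation.ReflTransGen.single ⟨hw's, hzs, hne_wz, hng⟩)
        have hne_uz : u' ≠ z := fun h => hnr (h ▸ reach_refl)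
        have gu'z : g u' z := by
          by_contra hng
          exact hnr (Relation.ReflTransGen.single ⟨hu's, hzs, hne_uz, hng⟩)
        refine ⟨v, w', z, u', hv, hsub hw's, hsub hzs, hsub hu's, hPw', gw'z, hsym _ _ gu'z,
          ⟨(Finset.ne_of_mem_erase hzs).symm, hgz⟩, ⟨hu'v.symm, hPu'⟩,
          ⟨(hstep.2.2.1).symm, fun h => hstep.2.2.2 (hsym _ _ h)⟩⟩
      · push_neg at hz
        right
        have hzstar : ∃ z ∈ s', ¬ Reach s' (cpl g) u' z := by
          by_cases h' : Reach s' (cpl g) u' x0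
          · exact ⟨y0, hy0, fun h => hxy (Relation.ReflTransGen.trans (reach_symm cosym h') h)⟩
          · exact ⟨x0, hx0, h'⟩
        obtain ⟨z, hzs, hznr⟩ := hzstar
        refine ⟨u', hsub hu's, z, hsub hzs,
          not_reach_of_closed (C := fun q => q = v ∨ Reach s' (cpl g) u' q) ?_
            (Or.inr reach_refl) ?_⟩
        · rintro p q hC ⟨hps, hqs, hcpq⟩
          rcases eq_or_ne q v with h | h
          · exact Or.inl h
          have hqs' : q ∈ s' := Finset.mem_erase.mpr ⟨h, hqs⟩
          rcases hC with rfl | hCp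
          · refine Or.inr ?_
            by_contra hnr
            exact hcpq.2 (hz q hqs' hnr)
          · have hps' : p ∈ s' := mem_of_reach hu's hCp
            exact Or.inr (Relation.ReflTransGen.tail hCp ⟨hps', hqs', hcpq⟩)
        · rintro (rfl | h)
          · exact (Finset.ne_of_mem_erase hzs) rfl
          · exact hznr h
    · -- no mixed component
      push_neg at hmix
      by_cases hN : ∃ w ∈ s', g v w
      · obtain ⟨w0, hw0, hgw0⟩ := hN
        right
        refine ⟨v, hv, w0, hsub hw0,
          not_reach_of_closed (C := fun q => q = v ∨ (q ∈ s' ∧ ¬ g v q)) ?_ (Or.inl rfl) ?_⟩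
        · rintro p q hC ⟨hps, hqs, hcpq⟩
          rcases eq_or_ne q v with h | h
          · exact Or.inl h
          have hqs' : q ∈ s' := Finset.mem_erase.mpr ⟨h, hqs⟩
          rcases hC with rfl | ⟨hps', hngp⟩
          · exact Or.inr ⟨hqs', hcpq.2⟩
          · refine Or.inr ⟨hqs', fun hgq => ?_⟩
            exact hmix p hps' q hqs' hngp hgq (Relation.ReflTransGen.single ⟨hps', hqs', hcpq⟩)
        · rintro (h | ⟨_, h⟩)
          · exact (Finset.ne_of_mem_erase hw0) h
          · exact h hgw0
      · -- v isolated in g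
        push_neg at hN
        left
        refine ⟨v, hv, x0, hx0s, not_reach_of_closed (C := fun z => z = v) ?_ rfl hx0v⟩
        rintro u w rfl ⟨_, hws, hgw⟩
        rcases eq_or_ne w u with h | h
        · exact h
        · exact absurd hgw (hN w (Finset.mem_erase.mpr ⟨h, hws⟩))


lemma hasP4_mono {s t : Finset α} {g : α → α → Prop} (hst : s ⊆ t) (h : HasP4 s g) :
    HasP4 t g := by
  obtain ⟨a, b, c, d, ha, hb, hc, hd, h1, h2, h3, h4, h5, h6⟩ := h
  exact ⟨a, b, c, d, hst ha, hst hb, hst hc, hst hd, h1, h2, h3, h4, h5, h6⟩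

lemma cograph (n : ℕ) : ∀ (s : Finset α) (g : α → α → Prop), s.card ≤ n → 2 ≤ s.card →
    (∀ x y, g x y → g y x) → (∀ x, ¬ g x x) → ¬ HasP4 s g →
    (∃ x ∈ s, ∃ y ∈ s, ¬ Reach s g x y) ∨ (∃ x ∈ s, ∃ y ∈ s, ¬ Reach s (cpl g) x y) := by
  induction n with
  | zero => intro s g h1 h2 _ _ _; omega
  | succ n ih =>
    intro s g hcard h2 hsym hirr hP4
    obtain ⟨v, hv⟩ : s.Nonempty := Finset.card_pos.mp (by omega)
    have hs'card : (s.erase v).card = s.card - 1 := Finset.card_erase_of_mem hv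
    have hsub : s.erase v ⊆ s := Finset.erase_subset _ _
    by_cases hsmall : s.card ≤ 2
    · -- exactly two elements
      obtain ⟨x, hx⟩ : ∃ x, s.erase v = {x} := Finset.card_eq_one.mp (by omega)
      have hxe : x ∈ s.erase v := hx ▸ Finset.mem_singleton_self x
      have hxs : x ∈ s := hsub hxe
      have hxv : x ≠ v := Finset.ne_of_mem_erase hxe
      have hmem : ∀ z ∈ s, z ≠ v → z = x := by
        intro z hz hzv
        have : z ∈ s.erase v := Finset.mem_erase.mpr ⟨hzv, hz⟩
        rw [hx] at this
        exact Finset.mem_singleton.mp this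
      by_cases hg : g v x
      · right
        refine ⟨v, hv, x, hxs, not_reach_of_closed (C := fun z => z = v) ?_ rfl hxv⟩
        rintro p q rfl ⟨_, hqs, hne, hng⟩
        rcases eq_or_ne q p with h | h
        · exact h
        · exact absurd (hmem q hqs h ▸ hg) hng
      · left
        refine ⟨v, hv, x, hxs, not_reach_of_closed (C := fun z => z = v) ?_ rfl hxv⟩
        rintro p q rfl ⟨_, hqs, hgq⟩
        rcases eq_or_ne q p with h | h
        · exact h
        · rw [hmem q hqs h] at hgq
          exact (hg hgq).elim
    · have h2' : 2 ≤ (s.erase v).card := by omega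
      have ihres := ih (s.erase v) g (by omega) h2' hsym hirr
        (fun h => hP4 (hasP4_mono hsub h))
      rcases ihres with hgd | hcd
      · -- g disconnected on s' : use key with cpl g
        have hP4c : ¬ HasP4 s (cpl g) := fun h => hP4 (hasP4_cpl hsym h)
        have hdisc : ∃ x ∈ s.erase v, ∃ y ∈ s.erase v, ¬ Reach (s.erase v) (cpl (cpl g)) x y := by
          obtain ⟨x, hxm, y, hym, hnr⟩ := hgd
          exact ⟨x, hxm, y, hym, fun h => hnr (reach_congr (cpl_cpl hirr) h)⟩
        rcases key v hv (cpl_symm hsym) cpl_irrefl hP4c hdisc with h | h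
        · exact Or.inr h
        · obtain ⟨x, hxm, y, hym, hnr⟩ := h
          exact Or.inl ⟨x, hxm, y, hym, fun h => hnr (reach_congr (cpl_cpl' hirr) h)⟩
      · exact key v hv hsym hirr hP4 hcd


lemma exists_minimal (n : ℕ) : ∀ (s : Finset α) (r : α → α → Prop), s.card ≤ n → s.Nonempty →
    (∀ a, ¬ r a a) → (∀ a b c, r a b → r b c → r a c) →
    ∃ x ∈ s, ∀ y ∈ s, ¬ r y x := by
  induction n with
  | zero =>
    intro s r hc hne _ _
    exact absurd (Finset.card_pos.mpr hne) (by omega)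
  | succ n ih =>
    intro s r hc hne hirr htr
    classical
    obtain ⟨x, hx⟩ := hne
    by_cases hmin : ∀ y ∈ s, ¬ r y x
    · exact ⟨x, hx, hmin⟩
    · push_neg at hmin
      obtain ⟨y, hy, hr⟩ := hmin
      set s2 := s.filter (fun z => r z x) with hs2
      have hy2 : y ∈ s2 := Finset.mem_filter.mpr ⟨hy, hr⟩
      have hx2 : x ∉ s2 := fun h => hirr x (Finset.mem_filter.mp h).2
      have hss : s2 ⊂ s := (Finset.ssubset_iff_of_subset (Finset.filter_subset _ _)).mpr ⟨x, hx, hx2⟩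
      have hcard : s2.card ≤ n := by
        have := Finset.card_lt_card hss
        omega
      obtain ⟨x0, hx0, hmin0⟩ := ih s2 r hcard ⟨y, hy2⟩ hirr htr
      refine ⟨x0, Finset.filter_subset _ _ hx0, fun z hz hrz => ?_⟩
      have hrx : r x0 x := (Finset.mem_filter.mp hx0).2
      exact hmin0 z (Finset.mem_filter.mpr ⟨hz, htr _ _ _ hrz hrx⟩) hrz

def HasN (s : Finset α) (r : α → α → Prop) : Prop :=
  ∃ a b c d, a ∈ s ∧ b ∈ s ∧ c ∈ s ∧ d ∈ s ∧
    r a c ∧ r a d ∧ r b d ∧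
    ¬ r a b ∧ ¬ r b a ∧ ¬ r b c ∧ ¬ r c b ∧ ¬ r c d ∧ ¬ r d c

def restrict (t : Finset α) (r : α → α → Prop) (a b : α) : Prop := a ∈ t ∧ b ∈ t ∧ r a b

lemma hasN_restrict {s t : Finset α} {r : α → α → Prop} (hts : t ⊆ s)
    (h : HasN t (restrict t r)) : HasN s r := by
  obtain ⟨a, b, c, d, ha, hb, hc, hd, h1, h2, h3, n1, n2, n3, n4, n5, n6⟩ := h
  exact ⟨a, b, c, d, hts ha, hts hb, hts hc, hts hd, h1.2.2, h2.2.2, h3.2.2,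
    fun h => n1 ⟨ha, hb, h⟩, fun h => n2 ⟨hb, ha, h⟩, fun h => n3 ⟨hb, hc, h⟩,
    fun h => n4 ⟨hc, hb, h⟩, fun h => n5 ⟨hc, hd, h⟩, fun h => n6 ⟨hd, hc, h⟩⟩


lemma hasN_of_hasP4 {s : Finset α} {r : α → α → Prop}
    (htr : ∀ a b c, r a b → r b c → r a c)
    (h : HasP4 s (fun x y => r x y ∨ r y x)) : HasN s r := by
  obtain ⟨a, b, c, d, ha, hb, hc, hd, eab, ebc, ecd, ⟨_, nac⟩, ⟨_, nad⟩, ⟨_, nbd⟩⟩ := h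
  have nac1 : ¬ r a c := fun h => nac (Or.inl h)
  have nac2 : ¬ r c a := fun h => nac (Or.inr h)
  have nad1 : ¬ r a d := fun h => nad (Or.inl h)
  have nad2 : ¬ r d a := fun h => nad (Or.inr h)
  have nbd1 : ¬ r b d := fun h => nbd (Or.inl h)
  have nbd2 : ¬ r d b := fun h => nbd (Or.inr h)
  rcases eab with hab | hba
  · have hcb : r c b := by
      rcases ebc with h | h
      · exact absurd (htr _ _ _ hab h) nac1
      · exact h
    have hcd : r c d := by
      rcases ecd with h | h
      · exact h
      · exact absurd (htr _ _ _ h hcb) nbd2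
    exact ⟨c, a, d, b, hc, ha, hd, hb, hcd, hcb, hab,
      nac2, nac1, nad1, nad2, nbd2, nbd1⟩
  · have hbc : r b c := by
      rcases ebc with h | h
      · exact h
      · exact absurd (htr _ _ _ h hba) nac2
    have hdc : r d c := by
      rcases ecd with h | h
      · exact absurd (htr _ _ _ hbc h) nbd1
      · exact h
    exact ⟨b, d, a, c, hb, hd, ha, hc, hba, hbc, hdc,
      nbd1, nbd2, nad2, nad1, nac1, nac2⟩


lemma backward (n : ℕ) : ∀ (s : Finset α) (r : α → α → Prop), s.card ≤ n → s.Nonempty →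
    (∀ a b, r a b → a ∈ s ∧ b ∈ s) → (∀ a, ¬ r a a) → (∀ a b c, r a b → r b c → r a c) →
    ¬ HasN s r → IsVSP s r := by
  induction n with
  | zero =>
    intro s r hc hne _ _ _ _
    exact absurd (Finset.card_pos.mpr hne) (by omega)
  | succ n ih =>
    intro s r hc hne hsupp hirr htr hN
    classical
    by_cases h1 : s.card ≤ 1
    · -- singleton
      have hcard1 : s.card = 1 := le_antisymm h1 (Finset.card_pos.mpr hne)
      obtain ⟨a, ha⟩ := Finset.card_eq_one.mp hcard1
      subst ha
      have hr : r = fun _ _ => False := by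
        funext x y
        simp only [eq_iff_iff, iff_false]
        intro h
        obtain ⟨hx, hy⟩ := hsupp _ _ h
        rw [Finset.mem_singleton] at hx hy
        subst hx; subst hy
        exact hirr _ h
      rw [hr]
      exact IsVSP.single a
    · have h2 : 2 ≤ s.card := by omega
      have cgsym : ∀ x y, (r x y ∨ r y x) → (r y x ∨ r x y) := fun _ _ h => h.symm
      have cgirr : ∀ x, ¬ (r x x ∨ r x x) := fun x h => h.elim (hirr x) (hirr x)
      have hP4 : ¬ HasP4 s (fun x y => r x y ∨ r y x) :=
        fun h => hN (hasN_of_hasP4 htr h)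
      have hres := cograph s.card s (fun x y => r x y ∨ r y x) le_rfl h2 cgsym cgirr hP4
      -- common facts about restrictions
      have rsupp : ∀ (t : Finset α), ∀ a b, restrict t r a b → a ∈ t ∧ b ∈ t :=
        fun t a b h => ⟨h.1, h.2.1⟩
      have rirr : ∀ (t : Finset α), ∀ a, ¬ restrict t r a a := fun t a h => hirr a h.2.2
      have rtr : ∀ (t : Finset α), ∀ a b c, restrict t r a b → restrict t r b c →
          restrict t r a c := fun t a b c h h' => ⟨h.1, h'.2.1, htr _ _ _ h.2.2 h'.2.2⟩
      rcases hres with hdisc | hcodisc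
      · -- parallel decomposition
        obtain ⟨x, hxs, y, hys, hnr⟩ := hdisc
        set t := s.filter (fun z => Reach s (fun x y => r x y ∨ r y x) x z) with ht
        set u := s \ t with hu
        have htsub : t ⊆ s := Finset.filter_subset _ _
        have husub : u ⊆ s := Finset.sdiff_subset
        have hxt : x ∈ t := Finset.mem_filter.mpr ⟨hxs, reach_refl⟩
        have hyu : y ∈ u := Finset.mem_sdiff.mpr ⟨hys, fun h => hnr (Finset.mem_filter.mp h).2⟩
        have hdisj : Disjoint t u := Finset.disjoint_sdiff
        have huni : t ∪ u = s := Finset.union_sdiff_of_subset htsub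
        have hclosure : ∀ a b, a ∈ t → b ∈ s → (r a b ∨ r b a) → b ∈ t := by
          intro a b hat hbs hg
          exact Finset.mem_filter.mpr ⟨hbs,
            Relation.ReflTransGen.tail (Finset.mem_filter.mp hat).2 ⟨htsub hat, hbs, hg⟩⟩
        have hct : t.card ≤ n := by
          have : t ⊂ s := (Finset.ssubset_iff_of_subset htsub).mpr
            ⟨y, hys, fun h => (Finset.mem_sdiff.mp hyu).2 h⟩
          have := Finset.card_lt_card this
          omega
        have hcu : u.card ≤ n := by
          have : u ⊂ s := (Finset.ssubset_iff_of_subset husub).mpr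
            ⟨x, hxs, fun h => (Finset.mem_sdiff.mp h).2 hxt⟩
          have := Finset.card_lt_card this
          omega
        have hT : IsVSP t (restrict t r) :=
          ih t (restrict t r) hct ⟨x, hxt⟩ (rsupp t) (rirr t) (rtr t)
            (fun h => hN (hasN_restrict htsub h))
        have hU : IsVSP u (restrict u r) :=
          ih u (restrict u r) hcu ⟨y, hyu⟩ (rsupp u) (rirr u) (rtr u)
            (fun h => hN (hasN_restrict husub h))
        have hv := IsVSP.parallel hdisj hT hU
        have hrel : (fun a b => restrict t r a b ∨ restrict u r a b) = r := by
          funext a b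
          apply propext
          constructor
          · rintro (h | h) <;> exact h.2.2
          · intro hab
            obtain ⟨has, hbs⟩ := hsupp _ _ hab
            by_cases hat : a ∈ t
            · exact Or.inl ⟨hat, hclosure a b hat hbs (Or.inl hab), hab⟩
            · have hau : a ∈ u := Finset.mem_sdiff.mpr ⟨has, hat⟩
              have hbu : b ∈ u := by
                refine Finset.mem_sdiff.mpr ⟨hbs, fun hbt => hat ?_⟩
                exact hclosure b a hbt has (Or.inr hab)
              exact Or.inr ⟨hau, hbu, hab⟩
        rw [huni, hrel] at hv
        exact hv
      · -- series decomposition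
        obtain ⟨x, hxs, y, hys, hnr⟩ := hcodisc
        have cosym := cpl_symm cgsym
        obtain ⟨x0, hx0s, hmin'⟩ := exists_minimal s.card s (fun a b => r b a) le_rfl hne
          (fun a h => hirr a h) (fun a b c h h' => htr _ _ _ h' h)
        have hmin : ∀ y ∈ s, ¬ r x0 y := hmin'
        set C := s.filter (fun z => Reach s (cpl (fun x y => r x y ∨ r y x)) x0 z) with hC
        set B := s \ C with hB
        have hCsub : C ⊆ s := Finset.filter_subset _ _
        have hBsub : B ⊆ s := Finset.sdiff_subset
        have hx0C : x0 ∈ C := Finset.mem_filter.mpr ⟨hx0s, reach_refl⟩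
        have hBne : ∃ z, z ∈ B := by
          by_cases hxC : x ∈ C
          · refine ⟨y, Finset.mem_sdiff.mpr ⟨hys, fun hyC => ?_⟩⟩
            exact hnr (Relation.ReflTransGen.trans
              (reach_symm cosym (Finset.mem_filter.mp hxC).2) (Finset.mem_filter.mp hyC).2)
          · exact ⟨x, Finset.mem_sdiff.mpr ⟨hxs, hxC⟩⟩
        obtain ⟨z0, hz0B⟩ := hBne
        -- everything outside C is above everything in C
        have hcomp : ∀ b ∈ s, b ∉ C → ∀ c ∈ C, r b c := by
          intro b hbs hbC
          have hcg : ∀ c ∈ C, r b c ∨ r c b := by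
            intro c hcC
            have hreach := (Finset.mem_filter.mp hcC).2
            have hbc : b ≠ c := fun h => hbC (h ▸ hcC)
            by_contra hn
            refine hbC (Finset.mem_filter.mpr ⟨hbs, Relation.ReflTransGen.tail hreach
              ⟨hCsub hcC, hbs, hbc.symm, fun h => hn h.symm⟩⟩)
          have hbase : r b x0 := by
            rcases hcg x0 hx0C with h | h
            · exact h
            · exact absurd h (hmin b hbs)
          have hstep : ∀ c, Reach s (cpl (fun x y => r x y ∨ r y x)) x0 c → r b c := by
            intro c hr
            induction hr with
            | refl => exact hbase
            | @tail p q h1 h2 ihh =>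
                have hq_inC : q ∈ C := Finset.mem_filter.mpr ⟨h2.2.1,
                  Relation.ReflTransGen.tail h1 h2⟩
                rcases hcg q hq_inC with h | h
                · exact h
                · exact absurd (Or.inr (htr _ _ _ h ihh)) h2.2.2.2
          intro c hcC
          exact hstep c (Finset.mem_filter.mp hcC).2
        have hdisj : Disjoint B C := Finset.sdiff_disjoint
        have huni : B ∪ C = s := Finset.sdiff_union_of_subset hCsub
        have hcB : B.card ≤ n := by
          have : B ⊂ s := (Finset.ssubset_iff_of_subset hBsub).mpr
            ⟨x0, hx0s, fun h => (Finset.mem_sdiff.mp h).2 hx0C⟩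
          have := Finset.card_lt_card this
          omega
        have hcC : C.card ≤ n := by
          have : C ⊂ s := (Finset.ssubset_iff_of_subset hCsub).mpr
            ⟨z0, hBsub hz0B, (Finset.mem_sdiff.mp hz0B).2⟩
          have := Finset.card_lt_card this
          omega
        have hBvsp : IsVSP B (restrict B r) :=
          ih B (restrict B r) hcB ⟨z0, hz0B⟩ (rsupp B) (rirr B) (rtr B)
            (fun h => hN (hasN_restrict hBsub h))
        have hCvsp : IsVSP C (restrict C r) :=
          ih C (restrict C r) hcC ⟨x0, hx0C⟩ (rsupp C) (rirr C) (rtr C)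
            (fun h => hN (hasN_restrict hCsub h))
        have hv := IsVSP.series hdisj hBvsp hCvsp
        have hrel : (fun a b => restrict B r a b ∨ restrict C r a b ∨ (a ∈ B ∧ b ∈ C)) = r := by
          funext a b
          apply propext
          constructor
          · rintro (h | h | ⟨haB, hbC⟩)
            · exact h.2.2
            · exact h.2.2
            · exact hcomp a ((Finset.mem_sdiff.mp haB).1) ((Finset.mem_sdiff.mp haB).2) b hbC
          · intro hab
            obtain ⟨has, hbs⟩ := hsupp _ _ hab
            by_cases hbC : b ∈ C
            · by_cases haC : a ∈ C
              · exact Or.inr (Or.inl ⟨haC, hbC, hab⟩)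
              · exact Or.inr (Or.inr ⟨Finset.mem_sdiff.mpr ⟨has, haC⟩, hbC⟩)
            · have haC : a ∉ C := by
                intro haC
                exact hirr a (htr _ _ _ hab (hcomp b hbs hbC a haC))
              exact Or.inl ⟨Finset.mem_sdiff.mpr ⟨has, haC⟩,
                Finset.mem_sdiff.mpr ⟨hbs, hbC⟩, hab⟩
        rw [huni, hrel] at hv
        exact hv


lemma vsp_support {s : Finset α} {r : α → α → Prop} (h : IsVSP s r) :
    ∀ a b, r a b → a ∈ s ∧ b ∈ s := by
  induction h with
  | single a => intro x y hxy; exact hxy.elim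
  | series hdisj h1 h2 ih1 ih2 =>
      intro x y hxy
      rcases hxy with h | h | ⟨h, h'⟩
      · exact ⟨Finset.mem_union_left _ (ih1 _ _ h).1, Finset.mem_union_left _ (ih1 _ _ h).2⟩
      · exact ⟨Finset.mem_union_right _ (ih2 _ _ h).1, Finset.mem_union_right _ (ih2 _ _ h).2⟩
      · exact ⟨Finset.mem_union_left _ h, Finset.mem_union_right _ h'⟩
  | parallel hdisj h1 h2 ih1 ih2 =>
      intro x y hxy
      rcases hxy with h | h
      · exact ⟨Finset.mem_union_left _ (ih1 _ _ h).1, Finset.mem_union_left _ (ih1 _ _ h).2⟩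
      · exact ⟨Finset.mem_union_right _ (ih2 _ _ h).1, Finset.mem_union_right _ (ih2 _ _ h).2⟩

lemma vsp_no_hasN {s : Finset α} {r : α → α → Prop} (h : IsVSP s r) : ¬ HasN s r := by
  induction h with
  | single a =>
      rintro ⟨a', b, c, d, _, _, _, _, hac, _⟩
      exact hac
  | @series s t r1 r2 hdisj h1 h2 ih1 ih2 =>
      rintro ⟨a, b, c, d, ha, hb, hc, hd, rac, rad, rbd, nab, nba, nbc, ncb, ncd, ndc⟩
      have supp1 := vsp_support h1
      have supp2 := vsp_support h2
      have hdis : ∀ z, z ∈ s → z ∈ t → False :=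
        fun z hz hz' => Finset.disjoint_left.mp hdisj hz hz'
      have sameside : ∀ x y, x ∈ s ∪ t → y ∈ s ∪ t →
          ¬ (r1 x y ∨ r2 x y ∨ (x ∈ s ∧ y ∈ t)) → ¬ (r1 y x ∨ r2 y x ∨ (y ∈ s ∧ x ∈ t)) →
          (x ∈ s ∧ y ∈ s) ∨ (x ∈ t ∧ y ∈ t) := by
        intro x y hx hy hxy hyx
        rcases Finset.mem_union.mp hx with hxs | hxt
        · rcases Finset.mem_union.mp hy with hys | hyt
          · exact Or.inl ⟨hxs, hys⟩
          · exact absurd (Or.inr (Or.inr ⟨hxs, hyt⟩)) hxy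
        · rcases Finset.mem_union.mp hy with hys | hyt
          · exact absurd (Or.inr (Or.inr ⟨hys, hxt⟩)) hyx
          · exact Or.inr ⟨hxt, hyt⟩
      have sab := sameside a b ha hb nab nba
      have sbc := sameside b c hb hc nbc ncb
      have scd := sameside c d hc hd ncd ndc
      rcases sab with ⟨has, hbs⟩ | ⟨hat, hbt⟩
      · have hcs : c ∈ s := by
          rcases sbc with ⟨_, h⟩ | ⟨h, _⟩
          · exact h
          · exact absurd hbs (fun hh => hdis b hh h)
        have hds : d ∈ s := by
          rcases scd with ⟨_, h⟩ | ⟨h, _⟩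
          · exact h
          · exact absurd hcs (fun hh => hdis c hh h)
        have red : ∀ x y, x ∈ s → y ∈ s → (r1 x y ∨ r2 x y ∨ (x ∈ s ∧ y ∈ t)) → r1 x y := by
          rintro x y hx hy (h | h | ⟨_, h⟩)
          · exact h
          · exact absurd hx (fun hh => hdis x hh (supp2 _ _ h).1)
          · exact absurd hy (fun hh => hdis y hh h)
        exact ih1 ⟨a, b, c, d, has, hbs, hcs, hds,
          red _ _ has hcs rac, red _ _ has hds rad, red _ _ hbs hds rbd,
          fun h => nab (Or.inl h), fun h => nba (Or.inl h), fun h => nbc (Or.inl h),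
          fun h => ncb (Or.inl h), fun h => ncd (Or.inl h), fun h => ndc (Or.inl h)⟩
      · have hct : c ∈ t := by
          rcases sbc with ⟨h, _⟩ | ⟨_, h⟩
          · exact absurd h (fun hh => hdis b hh hbt)
          · exact h
        have hdt : d ∈ t := by
          rcases scd with ⟨h, _⟩ | ⟨_, h⟩
          · exact absurd h (fun hh => hdis c hh hct)
          · exact h
        have red : ∀ x y, x ∈ t → y ∈ t → (r1 x y ∨ r2 x y ∨ (x ∈ s ∧ y ∈ t)) → r2 x y := by
          rintro x y hx hy (h | h | ⟨h, _⟩)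
          · exact absurd (supp1 _ _ h).1 (fun hh => hdis x hh hx)
          · exact h
          · exact absurd h (fun hh => hdis x hh hx)
        exact ih2 ⟨a, b, c, d, hat, hbt, hct, hdt,
          red _ _ hat hct rac, red _ _ hat hdt rad, red _ _ hbt hdt rbd,
          fun h => nab (Or.inr (Or.inl h)), fun h => nba (Or.inr (Or.inl h)),
          fun h => nbc (Or.inr (Or.inl h)), fun h => ncb (Or.inr (Or.inl h)),
          fun h => ncd (Or.inr (Or.inl h)), fun h => ndc (Or.inr (Or.inl h))⟩
  | @parallel s t r1 r2 hdisj h1 h2 ih1 ih2 =>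
      rintro ⟨a, b, c, d, ha, hb, hc, hd, rac, rad, rbd, nab, nba, nbc, ncb, ncd, ndc⟩
      have supp1 := vsp_support h1
      have supp2 := vsp_support h2
      have hdis : ∀ z, z ∈ s → z ∈ t → False :=
        fun z hz hz' => Finset.disjoint_left.mp hdisj hz hz'
      rcases rac with h | h
      · have has : a ∈ s := (supp1 _ _ h).1
        have hcs : c ∈ s := (supp1 _ _ h).2
        have rad1 : r1 a d := by
          rcases rad with h' | h'
          · exact h'
          · exact absurd has (fun hh => hdis a hh (supp2 _ _ h').1)
        have hds : d ∈ s := (supp1 _ _ rad1).2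
        have rbd1 : r1 b d := by
          rcases rbd with h' | h'
          · exact h'
          · exact absurd hds (fun hh => hdis d hh (supp2 _ _ h').2)
        have hbs : b ∈ s := (supp1 _ _ rbd1).1
        exact ih1 ⟨a, b, c, d, has, hbs, hcs, hds, h, rad1, rbd1,
          fun h' => nab (Or.inl h'), fun h' => nba (Or.inl h'), fun h' => nbc (Or.inl h'),
          fun h' => ncb (Or.inl h'), fun h' => ncd (Or.inl h'), fun h' => ndc (Or.inl h')⟩
      · have hat : a ∈ t := (supp2 _ _ h).1
        have hct : c ∈ t := (supp2 _ _ h).2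
        have rad2 : r2 a d := by
          rcases rad with h' | h'
          · exact absurd hat (fun hh => hdis a (supp1 _ _ h').1 hh)
          · exact h'
        have hdt : d ∈ t := (supp2 _ _ rad2).2
        have rbd2 : r2 b d := by
          rcases rbd with h' | h'
          · exact absurd hdt (fun hh => hdis d (supp1 _ _ h').2 hh)
          · exact h'
        have hbt : b ∈ t := (supp2 _ _ rbd2).1
        exact ih2 ⟨a, b, c, d, hat, hbt, hct, hdt, h, rad2, rbd2,
          fun h' => nab (Or.inr h'), fun h' => nba (Or.inr h'), fun h' => nbc (Or.inr h'),
          fun h' => ncb (Or.inr h'), fun h' => ncd (Or.inr h'), fun h' => ndc (Or.inr h')⟩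

end VSPAux

open VSPAux

/-- Valdes's characterisation: a finite (nonempty) partial order is vertex-series-parallel
iff it has no four elements `a, b, c, d` with exactly the relations `a ≻ c`, `a ≻ d`,
`b ≻ d` and no other relations among them (`a ‖ b`, `b ‖ c`, `c ‖ d`): the `N`-shaped
forbidden suborder. -/
theorem isVSP_iff_no_forbidden_suborder {α : Type*} [DecidableEq α]
    (s : Finset α) (hs : s.Nonempty) (r : α → α → Prop)
    (hsupp : ∀ a b, r a b → a ∈ s ∧ b ∈ s)
    (hirr : ∀ a, ¬ r a a) (htrans : ∀ a b c, r a b → r b c → r a c) :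
    IsVSP s r ↔
      ¬ ∃ a b c d, a ∈ s ∧ b ∈ s ∧ c ∈ s ∧ d ∈ s ∧
        r a c ∧ r a d ∧ r b d ∧
        ¬ r a b ∧ ¬ r b a ∧ ¬ r b c ∧ ¬ r c b ∧ ¬ r c d ∧ ¬ r d c := by
  constructor
  · intro h
    exact vsp_no_hasN h
  · intro h
    exact backward s.card s r le_rfl hs hsupp hirr htrans h
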